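/- arXiv:2411.16988 — 2 statements merged into one kernel-verified Lean document; each statement's English description precedes it below -/
import Mathlib

section
/- Let L, M, N be positive integers and let g_0, …, g_{L−1} ∈ ℓ²(ℤ²,ℍ). If the Gabor system G(g,L,M,N) is a frame for ℓ²(ℤ²,ℍ) with frame bounds A ≤ B, then for every k ∈ ℤ² one has A/M² ≤ ∑_{l=0}^{L−1} ∑_{n∈ℤ²} |g_l(k − nN)|² ≤ B/M², where nN := (n₁N, n₂N). -/
noncomputable section

open scoped Real

/-- The real quaternions. -/
abbrev ℍ : Type := Quaternion ℝ

/-- `e_i θ = cos θ + (sin θ) i`. -/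
def eI (θ : ℝ) : ℍ := ⟨Real.cos θ, Real.sin θ, 0, 0⟩

/-- `e_j θ = cos θ + (sin θ) j`. -/
def eJ (θ : ℝ) : ℍ := ⟨Real.cos θ, 0, Real.sin θ, 0⟩

/-- Quaternionic pairing `⟨f,g⟩ = ∑ conj (f k) * g k`. -/
def qpair (f g : ℤ × ℤ → ℍ) : ℍ := ∑' k : ℤ × ℤ, star (f k) * g k

/-- Membership in `ℓ²(ℤ², ℍ)`. -/
def MemL2 (f : ℤ × ℤ → ℍ) : Prop := Summable fun k : ℤ × ℤ => ‖f k‖ ^ 2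

/-- `‖f‖² = ∑ |f k|²`. -/
def normSq2 (f : ℤ × ℤ → ℍ) : ℝ := ∑' k : ℤ × ℤ, ‖f k‖ ^ 2

/-- A window is real-valued if all its values lie in `ℝ ⊆ ℍ`. -/
def IsRealValued (f : ℤ × ℤ → ℍ) : Prop := ∀ k : ℤ × ℤ, f k = ((f k).re : ℍ)

/-- The Gabor atom `E_{m/M} T_{nN} w`. -/
def gaborAtom (M N : ℕ) (w : ℤ × ℤ → ℍ) (m : ℕ × ℕ) (n : ℤ × ℤ) : ℤ × ℤ → ℍ :=
  fun k =>
    eI (2 * π * (m.1 : ℝ) * (k.1 : ℝ) / (M : ℝ)) *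
      w (k.1 - n.1 * (N : ℤ), k.2 - n.2 * (N : ℤ)) *
      eJ (2 * π * (m.2 : ℝ) * (k.2 : ℝ) / (M : ℝ))

/-- The index square `{0, …, M-1}²`. -/
abbrev msq (M : ℕ) : Finset (ℕ × ℕ) := Finset.range M ×ˢ Finset.range M

/-- `k ∈ {0, …, N-1}²` inside `ℤ²`. -/
def InNsq (N : ℕ) (k : ℤ × ℤ) : Prop :=
  0 ≤ k.1 ∧ k.1 < (N : ℤ) ∧ 0 ≤ k.2 ∧ k.2 < (N : ℤ)

/-- `∑_{l<L} ∑_{n∈ℤ²} ∑_{m∈{0,…,M-1}²} |⟨E_{m/M}T_{nN}g_l, h⟩|²`. -/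
def frameSum (L M N : ℕ) (g : ℕ → ℤ × ℤ → ℍ) (h : ℤ × ℤ → ℍ) : ℝ :=
  ∑ l ∈ Finset.range L, ∑' n : ℤ × ℤ, ∑ m ∈ msq M,
    ‖qpair (gaborAtom M N (g l) m n) h‖ ^ 2

/-- Bessel system with bound `B`. -/
def IsBessel (L M N : ℕ) (g : ℕ → ℤ × ℤ → ℍ) (B : ℝ) : Prop :=
  ∀ h : ℤ × ℤ → ℍ, MemL2 h → frameSum L M N g h ≤ B * normSq2 h

/-- Frame with bounds `A ≤ B`. -/
def IsFrame (L M N : ℕ) (g : ℕ → ℤ × ℤ → ℍ) (A B : ℝ) : Prop :=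
  ∀ h : ℤ × ℤ → ℍ, MemL2 h →
    A * normSq2 h ≤ frameSum L M N g h ∧ frameSum L M N g h ≤ B * normSq2 h

/-- Parseval frame. -/
def IsParseval (L M N : ℕ) (g : ℕ → ℤ × ℤ → ℍ) : Prop :=
  ∀ h : ℤ × ℤ → ℍ, MemL2 h → frameSum L M N g h = normSq2 h

/-- Orthonormal system. -/
def IsON (L M N : ℕ) (g : ℕ → ℤ × ℤ → ℍ) : Prop :=
  ∀ l l' : ℕ, l < L → l' < L → ∀ m ∈ msq M, ∀ m' ∈ msq M, ∀ n n' : ℤ × ℤ,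
    qpair (gaborAtom M N (g l) m n) (gaborAtom M N (g l') m' n') =
      if l = l' ∧ m = m' ∧ n = n' then 1 else 0

/-- `G(k,p) = ∑_{l<L} ∑_{n∈ℤ²} g_l(k-nN) g_l(k+pM-nN)`. -/
def gaborG (L M N : ℕ) (g : ℕ → ℤ × ℤ → ℍ) (k p : ℤ × ℤ) : ℍ :=
  ∑ l ∈ Finset.range L, ∑' n : ℤ × ℤ,
    g l (k.1 - n.1 * (N : ℤ), k.2 - n.2 * (N : ℤ)) *
      g l (k.1 + p.1 * (M : ℤ) - n.1 * (N : ℤ), k.2 + p.2 * (M : ℤ) - n.2 * (N : ℤ))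

/-- Mixed version: `∑_{l<L} ∑_{n∈ℤ²} g_l(k-nN) h_l(k+pM-nN)`. -/
def gaborGmix (L M N : ℕ) (g h : ℕ → ℤ × ℤ → ℍ) (k p : ℤ × ℤ) : ℍ :=
  ∑ l ∈ Finset.range L, ∑' n : ℤ × ℤ,
    g l (k.1 - n.1 * (N : ℤ), k.2 - n.2 * (N : ℤ)) *
      h l (k.1 + p.1 * (M : ℤ) - n.1 * (N : ℤ), k.2 + p.2 * (M : ℤ) - n.2 * (N : ℤ))

/-- `∑_{l<L} ∑_{n∈ℤ²} |g_l(k-nN)|²`. -/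
def winSum (L N : ℕ) (g : ℕ → ℤ × ℤ → ℍ) (k : ℤ × ℤ) : ℝ :=
  ∑ l ∈ Finset.range L, ∑' n : ℤ × ℤ,
    ‖g l (k.1 - n.1 * (N : ℤ), k.2 - n.2 * (N : ℤ))‖ ^ 2

/-- Support of diameter `< M` in every row and every column. -/
def DiamLt (M : ℕ) (f : ℤ × ℤ → ℍ) : Prop :=
  (∀ k₂ k₁ k₁' : ℤ, f (k₁, k₂) ≠ 0 → f (k₁', k₂) ≠ 0 → |k₁ - k₁'| < (M : ℤ)) ∧
  (∀ k₁ k₂ k₂' : ℤ, f (k₁, k₂) ≠ 0 → f (k₁, k₂') ≠ 0 → |k₂ - k₂'| < (M : ℤ))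

/-- `M`-periodicity. -/
def MPeriodic (M : ℕ) (f : ℤ × ℤ → ℍ) : Prop :=
  ∀ k : ℤ × ℤ, f (k.1 + (M : ℤ), k.2) = f k ∧ f (k.1, k.2 + (M : ℤ)) = f k

/-- Duality of two Gabor systems (on finitely supported sequences). -/
def AreDual (L M N : ℕ) (g h : ℕ → ℤ × ℤ → ℍ) : Prop :=
  ∀ f φ : ℤ × ℤ → ℍ, (Function.support f).Finite → (Function.support φ).Finite →
    (∑ l ∈ Finset.range L, ∑' n : ℤ × ℤ, ∑ m ∈ msq M,
      qpair f (gaborAtom M N (g l) m n) * qpair (gaborAtom M N (h l) m n) φ)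
      = qpair f φ


lemma norm_eI' (θ : ℝ) : ‖eI θ‖ = 1 := by
  have h : Quaternion.normSq (eI θ) = 1 := by
    rw [Quaternion.normSq_def']; simp [eI]
  rw [norm_eq_sqrt_real_inner, Quaternion.inner_self, h, Real.sqrt_one]

lemma norm_eJ' (θ : ℝ) : ‖eJ θ‖ = 1 := by
  have h : Quaternion.normSq (eJ θ) = 1 := by
    rw [Quaternion.normSq_def']; simp [eJ]
  rw [norm_eq_sqrt_real_inner, Quaternion.inner_self, h, Real.sqrt_one]

/-- necessary condition for a quaternionic Gabor frame. -/
theorem stmt_0 (L M N : ℕ) (hL : 0 < L) (hM : 0 < M) (hN : 0 < N)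
    (g : ℕ → ℤ × ℤ → ℍ) (hg : ∀ l < L, MemL2 (g l))
    (A B : ℝ) (hA : 0 < A) (hAB : A ≤ B)
    (hframe : IsFrame L M N g A B) :
    ∀ k : ℤ × ℤ,
      A / (M : ℝ) ^ 2 ≤ winSum L N g k ∧ winSum L N g k ≤ B / (M : ℝ) ^ 2 := by
  intro k
  set h : ℤ × ℤ → ℍ := fun j => if j = k then 1 else 0 with hdef
  have hmem : MemL2 h := by
    apply summable_of_ne_finset_zero (s := {k})
    intro b hb
    simp only [Finset.mem_singleton] at hb
    simp [hdef, hb]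
  have hnorm : normSq2 h = 1 := by
    rw [normSq2, tsum_eq_single k]
    · simp [hdef]
    · intro b hb; simp [hdef, hb]
  have hpair : ∀ w m (n : ℤ × ℤ), qpair (gaborAtom M N w m n) h =
      star (gaborAtom M N w m n k) := by
    intro w m n
    rw [qpair, tsum_eq_single k]
    · simp [hdef]
    · intro b hb; simp [hdef, hb]
  have hatomnorm : ∀ l m (n : ℤ × ℤ), ‖gaborAtom M N (g l) m n k‖ =
      ‖g l (k.1 - n.1 * (N : ℤ), k.2 - n.2 * (N : ℤ))‖ := by
    intro l m n
    simp [gaborAtom, norm_mul, norm_eI', norm_eJ']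
  have hfs : frameSum L M N g h = (M : ℝ) ^ 2 * winSum L N g k := by
    rw [frameSum, winSum, Finset.mul_sum]
    refine Finset.sum_congr rfl fun l hl => ?_
    rw [← tsum_mul_left]
    refine tsum_congr fun n => ?_
    have hm : ∀ m ∈ msq M, ‖qpair (gaborAtom M N (g l) m n) h‖ ^ 2 =
        ‖g l (k.1 - n.1 * (N : ℤ), k.2 - n.2 * (N : ℤ))‖ ^ 2 := by
      intro m _
      rw [hpair, norm_star, hatomnorm]
    rw [Finset.sum_congr rfl hm, Finset.sum_const]
    simp only [msq, Finset.card_product, Finset.card_range, nsmul_eq_mul]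
    push_cast; ring
  obtain ⟨h1, h2⟩ := hframe h hmem
  rw [hnorm, hfs, mul_one] at h1 h2
  have hMpos : (0 : ℝ) < (M : ℝ) ^ 2 := by positivity
  constructor
  · rw [div_le_iff₀ hMpos]; nlinarith
  · rw [le_div_iff₀ hMpos]; nlinarith
end
end

section
/- Let L, M, N be positive integers, let g_0, …, g_{L−1} ∈ ℓ²(ℤ²,ℍ) be real-valued, and let h : ℤ×ℤ → ℍ be finitely supported. Then ∑_{l=0}^{L−1} ∑_{n∈ℤ²} ∑_{m∈{0,…,M−1}²} |⟨E_{m/M}T_{nN}g_l, h⟩|² = F₁(h) + F₂(h), where F₁(h) := M² ∑_{k∈ℤ²} |h(k)|² · G(k,0) and F₂(h) := M² ∑_{k∈ℤ²} ∑_{p∈ℤ², p≠0} conj(h(k))·h(k+pM)·G(k,p), with G(k,p) := ∑_{l=0}^{L−1} ∑_{n∈ℤ²} g_l(k−nN)·g_l(k+pM−nN), nN := (n₁N,n₂N) and pM := (p₁M,p₂M). -/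
noncomputable section

open scoped Real

/-! ### auxiliary machinery for the proof of `stmt_3` -/

section aux

open scoped Quaternion

/-- `a+bi ↦ a+bi` as ring hom ℂ → ℍ. -/
def phiI : ℂ →+* ℍ where
  toFun z := ⟨z.re, z.im, 0, 0⟩
  map_one' := by ext <;> simp
  map_mul' z w := by
    change (⟨(z*w).re, (z*w).im, 0, 0⟩ : ℍ) = (⟨z.re, z.im, 0, 0⟩ : ℍ) * ⟨w.re, w.im, 0, 0⟩
    ext <;> simp [Quaternion.re_mul, Quaternion.imI_mul, Quaternion.imJ_mul, Quaternion.imK_mul] <;> ring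
  map_zero' := by ext <;> simp
  map_add' z w := by
    change (⟨(z+w).re, (z+w).im, 0, 0⟩ : ℍ) = (⟨z.re, z.im, 0, 0⟩ : ℍ) + ⟨w.re, w.im, 0, 0⟩
    ext <;> simp

/-- `a+bi ↦ a+bj` as ring hom ℂ → ℍ. -/
def phiJ : ℂ →+* ℍ where
  toFun z := ⟨z.re, 0, z.im, 0⟩
  map_one' := by ext <;> simp
  map_mul' z w := by
    change (⟨(z*w).re, 0, (z*w).im, 0⟩ : ℍ) = (⟨z.re, 0, z.im, 0⟩ : ℍ) * ⟨w.re, 0, w.im, 0⟩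
    ext <;> simp [Quaternion.re_mul, Quaternion.imI_mul, Quaternion.imJ_mul, Quaternion.imK_mul] <;> ring
  map_zero' := by ext <;> simp
  map_add' z w := by
    change (⟨(z+w).re, 0, (z+w).im, 0⟩ : ℍ) = (⟨z.re, 0, z.im, 0⟩ : ℍ) + ⟨w.re, 0, w.im, 0⟩
    ext <;> simp

@[simp] lemma eI_re (θ : ℝ) : (eI θ).re = Real.cos θ := rfl
@[simp] lemma eI_imI (θ : ℝ) : (eI θ).imI = Real.sin θ := rfl
@[simp] lemma eI_imJ (θ : ℝ) : (eI θ).imJ = 0 := rfl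
@[simp] lemma eI_imK (θ : ℝ) : (eI θ).imK = 0 := rfl
@[simp] lemma eJ_re (θ : ℝ) : (eJ θ).re = Real.cos θ := rfl
@[simp] lemma eJ_imI (θ : ℝ) : (eJ θ).imI = 0 := rfl
@[simp] lemma eJ_imJ (θ : ℝ) : (eJ θ).imJ = Real.sin θ := rfl
@[simp] lemma eJ_imK (θ : ℝ) : (eJ θ).imK = 0 := rfl
@[simp] lemma phiI_re (z : ℂ) : (phiI z).re = z.re := rfl
@[simp] lemma phiI_imI (z : ℂ) : (phiI z).imI = z.im := rfl
@[simp] lemma phiI_imJ (z : ℂ) : (phiI z).imJ = 0 := rfl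
@[simp] lemma phiI_imK (z : ℂ) : (phiI z).imK = 0 := rfl
@[simp] lemma phiJ_re (z : ℂ) : (phiJ z).re = z.re := rfl
@[simp] lemma phiJ_imI (z : ℂ) : (phiJ z).imI = 0 := rfl
@[simp] lemma phiJ_imJ (z : ℂ) : (phiJ z).imJ = z.im := rfl
@[simp] lemma phiJ_imK (z : ℂ) : (phiJ z).imK = 0 := rfl

lemma eI_eq (θ : ℝ) : eI θ = phiI (Complex.exp (θ * Complex.I)) := by
  rw [Complex.exp_mul_I]
  ext <;> simp [Complex.add_re, Complex.add_im, Complex.cos_ofReal_re, Complex.sin_ofReal_re,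
    Complex.cos_ofReal_im, Complex.sin_ofReal_im]

lemma eJ_eq (θ : ℝ) : eJ θ = phiJ (Complex.exp (θ * Complex.I)) := by
  rw [Complex.exp_mul_I]
  ext <;> simp [Complex.add_re, Complex.add_im, Complex.cos_ofReal_re, Complex.sin_ofReal_re,
    Complex.cos_ofReal_im, Complex.sin_ofReal_im]

lemma eI_mul (θ φ : ℝ) : eI θ * eI φ = eI (θ + φ) := by
  rw [eI_eq, eI_eq, eI_eq, ← map_mul, ← Complex.exp_add]; congr 1; push_cast; ring

lemma eJ_mul (θ φ : ℝ) : eJ θ * eJ φ = eJ (θ + φ) := by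
  rw [eJ_eq, eJ_eq, eJ_eq, ← map_mul, ← Complex.exp_add]; congr 1; push_cast; ring

lemma star_eI (θ : ℝ) : star (eI θ) = eI (-θ) := by
  ext <;> simp [Quaternion.re_star, Quaternion.imI_star, Quaternion.imJ_star, Quaternion.imK_star]

lemma star_eJ (θ : ℝ) : star (eJ θ) = eJ (-θ) := by
  ext <;> simp

/-- geometric character sum. -/
lemma exp_sum (M : ℕ) (hM : 0 < M) (d : ℤ) :
    ∑ m ∈ Finset.range M, Complex.exp ((2 * π * m * d / M) * Complex.I)
      = if (M : ℤ) ∣ d then (M : ℂ) else 0 := by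
  have hMne : (M : ℂ) ≠ 0 := Nat.cast_ne_zero.2 hM.ne'
  have hz : ∀ m : ℕ, Complex.exp ((2 * π * m * d / M) * Complex.I)
      = Complex.exp ((2 * π * d / M) * Complex.I) ^ m := by
    intro m
    rw [← Complex.exp_nat_mul]
    ring_nf
  simp_rw [hz]
  set z := Complex.exp ((2 * π * d / M) * Complex.I) with hzdef
  by_cases hdvd : (M : ℤ) ∣ d
  · obtain ⟨c, rfl⟩ := hdvd
    have : z = 1 := by
      rw [hzdef, Complex.exp_eq_one_iff]
      refine ⟨c, ?_⟩
      push_cast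
      field_simp
    rw [if_pos ⟨c, rfl⟩]
    simp [this]
  · have hz1 : z ≠ 1 := by
      rw [hzdef, Ne, Complex.exp_eq_one_iff]
      rintro ⟨n, hn⟩
      have him := congrArg Complex.im hn
      simp [Complex.mul_im, Complex.mul_re] at him
      -- him : 2 * π * d / M = n * (2 * π)  (as reals, roughly)
      have hπ : (π : ℝ) ≠ 0 := Real.pi_ne_zero
      have hMR : (M : ℝ) ≠ 0 := Nat.cast_ne_zero.2 hM.ne'
      field_simp at him
      have hd : (d : ℝ) = n * M :=
        mul_left_cancel₀ (show (2*π : ℝ) ≠ 0 by positivity) (by linear_combination (2 * π) * him)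
      have hd' : d = n * M := by exact_mod_cast hd
      exact hdvd ⟨n, by linarith⟩
    have hzM : z ^ M = 1 := by
      rw [hzdef, ← Complex.exp_nat_mul, Complex.exp_eq_one_iff]
      refine ⟨d, ?_⟩
      field_simp
    rw [geom_sum_eq hz1, hzM]
    simp [hdvd]

lemma eI_sum (M : ℕ) (hM : 0 < M) (d : ℤ) :
    ∑ m ∈ Finset.range M, eI (2 * π * m * d / M)
      = if (M : ℤ) ∣ d then ((M : ℝ) : ℍ) else 0 := by
  have := exp_sum M hM d
  calc ∑ m ∈ Finset.range M, eI (2 * π * m * d / M)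
      = phiI (∑ m ∈ Finset.range M, Complex.exp ((2 * π * m * d / M) * Complex.I)) := by
        rw [map_sum]; refine Finset.sum_congr rfl fun m _ => ?_
        rw [eI_eq]; norm_num
    _ = _ := by rw [this]; split <;> ext <;> simp

lemma eJ_sum (M : ℕ) (hM : 0 < M) (d : ℤ) :
    ∑ m ∈ Finset.range M, eJ (2 * π * m * d / M)
      = if (M : ℤ) ∣ d then ((M : ℝ) : ℍ) else 0 := by
  have := exp_sum M hM d
  calc ∑ m ∈ Finset.range M, eJ (2 * π * m * d / M)
      = phiJ (∑ m ∈ Finset.range M, Complex.exp ((2 * π * m * d / M) * Complex.I)) := by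
        rw [map_sum]; refine Finset.sum_congr rfl fun m _ => ?_
        rw [eJ_eq]; norm_num
    _ = _ := by rw [this]; split <;> ext <;> simp

lemma atom_pair (c c' θ1 θ2 θ1' θ2' : ℝ) (u v : ℍ) :
    (u * (eI θ1 * ((c : ℝ) : ℍ) * eJ θ2)) * (star (eI θ1' * ((c' : ℝ) : ℍ) * eJ θ2') * v)
      = (c * c') • (u * (eI θ1 * eJ (θ2 - θ2') * eI (-θ1')) * v) := by
  simp only [star_mul, star_eI, star_eJ, Quaternion.star_coe]
  simp only [Quaternion.coe_mul_eq_smul, Quaternion.mul_coe_eq_smul, smul_mul_assoc,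
    mul_smul_comm, smul_smul]
  rw [show θ2 - θ2' = θ2 + -θ2' by ring, ← eJ_mul]
  simp only [mul_assoc, smul_smul]
  rw [mul_comm c' c]

lemma key_msq (M : ℕ) (hM : 0 < M) (k₁ k₂ k₁' k₂' : ℤ) (u v : ℍ) :
    ∑ m ∈ msq M, u * (eI (2 * π * m.1 * (k₁ : ℝ) / M) *
        eJ (2 * π * m.2 * (k₂ : ℝ) / M - 2 * π * m.2 * (k₂' : ℝ) / M) *
        eI (-(2 * π * m.1 * (k₁' : ℝ) / M))) * v
      = if (M : ℤ) ∣ (k₁ - k₁') ∧ (M : ℤ) ∣ (k₂ - k₂') then ((M : ℝ) ^ 2) • (u * v) else 0 := by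
  rw [Finset.sum_product]
  have hJ : ∀ m₂ : ℕ, eJ (2 * π * m₂ * (k₂ : ℝ) / M - 2 * π * m₂ * (k₂' : ℝ) / M)
      = eJ (2 * π * m₂ * ((k₂ - k₂' : ℤ) : ℝ) / M) := by
    intro m₂; congr 1; push_cast; ring
  have step1 : ∀ m₁ : ℕ, ∑ m₂ ∈ Finset.range M,
      u * (eI (2 * π * m₁ * (k₁ : ℝ) / M) *
        eJ (2 * π * m₂ * (k₂ : ℝ) / M - 2 * π * m₂ * (k₂' : ℝ) / M) *
        eI (-(2 * π * m₁ * (k₁' : ℝ) / M))) * v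
      = u * (eI (2 * π * m₁ * (k₁ : ℝ) / M) *
          (if (M : ℤ) ∣ (k₂ - k₂') then ((M : ℝ) : ℍ) else 0) *
          eI (-(2 * π * m₁ * (k₁' : ℝ) / M))) * v := by
    intro m₁
    rw [← eJ_sum M hM (k₂ - k₂')]
    simp only [hJ, Finset.mul_sum, Finset.sum_mul]
  simp only [step1]
  by_cases h2 : (M : ℤ) ∣ (k₂ - k₂')
  · rw [if_pos h2]
    have step2 : ∀ m₁ : ℕ,
        u * (eI (2 * π * m₁ * (k₁ : ℝ) / M) * ((M : ℝ) : ℍ) *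
          eI (-(2 * π * m₁ * (k₁' : ℝ) / M))) * v
        = (M : ℝ) • (u * eI (2 * π * m₁ * ((k₁ - k₁' : ℤ) : ℝ) / M) * v) := by
      intro m₁
      simp only [Quaternion.mul_coe_eq_smul, smul_mul_assoc, mul_smul_comm, eI_mul]
      congr 3
      push_cast; ring
    simp only [step2, ← Finset.smul_sum]
    rw [← Finset.sum_mul, ← Finset.mul_sum, eI_sum M hM (k₁ - k₁')]
    by_cases h1 : (M : ℤ) ∣ (k₁ - k₁')
    · rw [if_pos h1, if_pos ⟨h1, h2⟩]
      simp only [Quaternion.mul_coe_eq_smul, Quaternion.coe_mul_eq_smul, smul_mul_assoc,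
        mul_smul_comm, smul_smul]
      norm_num [sq]
    · rw [if_neg h1, if_neg (by tauto)]
      simp
  · rw [if_neg h2, if_neg (by tauto)]
    simp

def reHom : ℍ →+ ℝ where
  toFun := QuaternionAlgebra.re
  map_zero' := rfl
  map_add' _ _ := rfl

lemma reHom_apply (q : ℍ) : reHom q = q.re := rfl

lemma norm_sq_eq (q : ℍ) : ‖q‖ ^ 2 = (star q * q).re := by
  rw [Quaternion.star_mul_self, Quaternion.re_coe, Quaternion.normSq_eq_norm_mul_self, sq]

lemma qpair_eq_sum (f h : ℤ × ℤ → ℍ) (s : Finset (ℤ × ℤ)) (hs : ∀ k ∉ s, h k = 0) :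
    qpair f h = ∑ k ∈ s, star (f k) * h k :=
  tsum_eq_sum (fun k hk => by rw [hs k hk, mul_zero])

lemma msum (M N : ℕ) (hM : 0 < M) (n : ℤ × ℤ) (w h : ℤ × ℤ → ℍ) (hw : IsRealValued w)
    (s : Finset (ℤ × ℤ)) (hs : ∀ k ∉ s, h k = 0) :
    ∑ m ∈ msq M, ‖qpair (gaborAtom M N w m n) h‖ ^ 2
      = ∑ k ∈ s, ∑ k' ∈ s, (if (M : ℤ) ∣ (k.1 - k'.1) ∧ (M : ℤ) ∣ (k.2 - k'.2)
        then ((M : ℝ) ^ 2 * ((w (k.1 - n.1 * (N : ℤ), k.2 - n.2 * (N : ℤ))).re *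
            (w (k'.1 - n.1 * (N : ℤ), k'.2 - n.2 * (N : ℤ))).re))
          * (star (h k) * h k').re else 0) := by
  have hq : ∀ m : ℕ × ℕ, qpair (gaborAtom M N w m n) h
      = ∑ k ∈ s, star (gaborAtom M N w m n k) * h k :=
    fun m => qpair_eq_sum _ _ s hs
  calc ∑ m ∈ msq M, ‖qpair (gaborAtom M N w m n) h‖ ^ 2
      = ∑ m ∈ msq M, ∑ k ∈ s, ∑ k' ∈ s,
          reHom ((star (h k) * gaborAtom M N w m n k) *
            (star (gaborAtom M N w m n k') * h k')) := by
        refine Finset.sum_congr rfl fun m _ => ?_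
        rw [norm_sq_eq, hq, star_sum, Finset.sum_mul_sum]
        rw [show ((∑ k ∈ s, ∑ k' ∈ s, star (star (gaborAtom M N w m n k) * h k) *
            (star (gaborAtom M N w m n k') * h k')).re : ℝ)
          = reHom (∑ k ∈ s, ∑ k' ∈ s, star (star (gaborAtom M N w m n k) * h k) *
            (star (gaborAtom M N w m n k') * h k')) from rfl, map_sum]
        refine Finset.sum_congr rfl fun k _ => ?_
        rw [map_sum]
        refine Finset.sum_congr rfl fun k' _ => ?_
        rw [star_mul, star_star]
    _ = ∑ k ∈ s, ∑ k' ∈ s, reHom (∑ m ∈ msq M,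
          (star (h k) * gaborAtom M N w m n k) *
            (star (gaborAtom M N w m n k') * h k')) := by
        rw [Finset.sum_comm]
        refine Finset.sum_congr rfl fun k _ => ?_
        rw [Finset.sum_comm]
        exact Finset.sum_congr rfl fun k' _ => (map_sum reHom _ _).symm
    _ = _ := by
        refine Finset.sum_congr rfl fun k _ => Finset.sum_congr rfl fun k' _ => ?_
        have hatom : ∑ m ∈ msq M, (star (h k) * gaborAtom M N w m n k) *
            (star (gaborAtom M N w m n k') * h k')
            = if (M : ℤ) ∣ (k.1 - k'.1) ∧ (M : ℤ) ∣ (k.2 - k'.2)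
              then (((M : ℝ) ^ 2) * ((w (k.1 - n.1 * (N : ℤ), k.2 - n.2 * (N : ℤ))).re *
                  (w (k'.1 - n.1 * (N : ℤ), k'.2 - n.2 * (N : ℤ))).re))
                • (star (h k) * h k') else 0 := by
          have hterm : ∀ m : ℕ × ℕ, (star (h k) * gaborAtom M N w m n k) *
              (star (gaborAtom M N w m n k') * h k')
              = ((w (k.1 - n.1 * (N : ℤ), k.2 - n.2 * (N : ℤ))).re *
                  (w (k'.1 - n.1 * (N : ℤ), k'.2 - n.2 * (N : ℤ))).re)
                • (star (h k) * (eI (2 * π * m.1 * (k.1 : ℝ) / M) *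
                    eJ (2 * π * m.2 * (k.2 : ℝ) / M - 2 * π * m.2 * (k'.2 : ℝ) / M) *
                    eI (-(2 * π * m.1 * (k'.1 : ℝ) / M))) * h k') := by
            intro m
            show (star (h k) * (_ * w _ * _)) * (star (_ * w _ * _) * h k') = _
            rw [hw (k.1 - n.1 * (N : ℤ), k.2 - n.2 * (N : ℤ)),
              hw (k'.1 - n.1 * (N : ℤ), k'.2 - n.2 * (N : ℤ)), atom_pair]
            simp only [Quaternion.re_coe]
          simp only [hterm, ← Finset.smul_sum, key_msq M hM k.1 k.2 k'.1 k'.2]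
          split
          · rw [smul_smul, mul_comm]
          · rw [smul_zero]
        rw [hatom]
        split
        · simp [reHom_apply, Quaternion.re_smul]
        · rfl

/-! ## summability helpers -/

lemma norm_sq_eq' (q : ℍ) : ‖q‖ ^ 2 = Quaternion.normSq q := by
  rw [Quaternion.normSq_eq_norm_mul_self, sq]

lemma summable_re_sq {w : ℤ × ℤ → ℍ} (hw : MemL2 w) :
    Summable fun κ : ℤ × ℤ => (w κ).re ^ 2 := by
  refine Summable.of_nonneg_of_le (fun κ => sq_nonneg _) (fun κ => ?_) hw
  rw [norm_sq_eq', Quaternion.normSq_def']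
  nlinarith [sq_nonneg (w κ).imI, sq_nonneg (w κ).imJ, sq_nonneg (w κ).imK]

lemma sig_inj (N : ℕ) (hN : 0 < N) (k : ℤ × ℤ) :
    Function.Injective fun n : ℤ × ℤ => ((k.1 - n.1 * (N : ℤ), k.2 - n.2 * (N : ℤ)) : ℤ × ℤ) := by
  intro a b hab
  have hN' : (N : ℤ) ≠ 0 := by exact_mod_cast hN.ne'
  have h1 : k.1 - a.1 * N = k.1 - b.1 * N := congrArg Prod.fst hab
  have h2 : k.2 - a.2 * N = k.2 - b.2 * N := congrArg Prod.snd hab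
  have : a.1 = b.1 := by
    have : a.1 * (N : ℤ) = b.1 * N := by omega
    exact mul_right_cancel₀ hN' this
  have h2' : a.2 = b.2 := by
    have : a.2 * (N : ℤ) = b.2 * N := by omega
    exact mul_right_cancel₀ hN' this
  exact Prod.ext this h2'

lemma summable_shift {w : ℤ × ℤ → ℍ} (hw : MemL2 w) (N : ℕ) (hN : 0 < N) (k : ℤ × ℤ) :
    Summable fun n : ℤ × ℤ => (w (k.1 - n.1 * (N : ℤ), k.2 - n.2 * (N : ℤ))).re ^ 2 :=
  (summable_re_sq hw).comp_injective (sig_inj N hN k)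

lemma summable_mul_of_sq {ι : Type*} {a b : ι → ℝ} (ha : Summable fun i => a i ^ 2)
    (hb : Summable fun i => b i ^ 2) : Summable fun i => a i * b i := by
  refine Summable.of_abs ?_
  refine Summable.of_nonneg_of_le (fun i => abs_nonneg _) (fun i => ?_) ((ha.add hb).div_const 2)
  rw [abs_mul]
  nlinarith [sq_nonneg (|a i| - |b i|), sq_abs (a i), sq_abs (b i), abs_nonneg (a i),
    abs_nonneg (b i)]

/-- The cross window sum. -/
def W (L N : ℕ) (g : ℕ → ℤ × ℤ → ℍ) (k k' : ℤ × ℤ) : ℝ :=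
  ∑ l ∈ Finset.range L, ∑' n : ℤ × ℤ,
    (g l (k.1 - n.1 * (N : ℤ), k.2 - n.2 * (N : ℤ))).re *
      (g l (k'.1 - n.1 * (N : ℤ), k'.2 - n.2 * (N : ℤ))).re

lemma summable_cross {w : ℤ × ℤ → ℍ} (hw : MemL2 w) (N : ℕ) (hN : 0 < N) (k k' : ℤ × ℤ) :
    Summable fun n : ℤ × ℤ => (w (k.1 - n.1 * (N : ℤ), k.2 - n.2 * (N : ℤ))).re *
      (w (k'.1 - n.1 * (N : ℤ), k'.2 - n.2 * (N : ℤ))).re :=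
  summable_mul_of_sq (summable_shift hw N hN k) (summable_shift hw N hN k')

lemma W_symm (L N : ℕ) (g : ℕ → ℤ × ℤ → ℍ) (k k' : ℤ × ℤ) :
    W L N g k k' = W L N g k' k := by
  unfold W
  exact Finset.sum_congr rfl fun l _ => tsum_congr fun n => mul_comm _ _

/-! ## coercion helpers -/

lemma coe_sum {ι : Type*} (t : Finset ι) (f : ι → ℝ) :
    ((∑ x ∈ t, f x : ℝ) : ℍ) = ∑ x ∈ t, ((f x : ℝ) : ℍ) := by
  simp only [← Quaternion.algebraMap_def, map_sum]

lemma coe_tsum {ι : Type*} {f : ι → ℝ} (hf : Summable f) :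
    ((∑' i, f i : ℝ) : ℍ) = ∑' i, ((f i : ℝ) : ℍ) := by
  have hc : Continuous (algebraMap ℝ ℍ) := by
    rw [Quaternion.algebraMap_def]; exact Quaternion.continuous_coe
  have := (hf.hasSum.map (algebraMap ℝ ℍ).toAddMonoidHom hc).tsum_eq
  simp only [RingHom.toAddMonoidHom_eq_coe, AddMonoidHom.coe_coe, Function.comp,
    Quaternion.algebraMap_def] at this
  rw [← this]

lemma quat_real_of_star_eq {q : ℍ} (hq : star q = q) : q = ((q.re : ℝ) : ℍ) := by
  have h1 := congrArg QuaternionAlgebra.imI hq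
  have h2 := congrArg QuaternionAlgebra.imJ hq
  have h3 := congrArg QuaternionAlgebra.imK hq
  simp [Quaternion.imI_star, Quaternion.imJ_star, Quaternion.imK_star] at h1 h2 h3
  ext <;> simp [Quaternion.re_coe, Quaternion.imI_coe, Quaternion.imJ_coe, Quaternion.imK_coe]
    <;> linarith

lemma gaborG_eq (L M N : ℕ) (hN : 0 < N) (g : ℕ → ℤ × ℤ → ℍ) (hg : ∀ l < L, MemL2 (g l))
    (hreal : ∀ l < L, IsRealValued (g l)) (k p : ℤ × ℤ) :
    gaborG L M N g k p
      = ((W L N g k (k.1 + p.1 * (M : ℤ), k.2 + p.2 * (M : ℤ)) : ℝ) : ℍ) := by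
  unfold gaborG W
  rw [coe_sum]
  refine Finset.sum_congr rfl fun l hl => ?_
  have hl' : l < L := Finset.mem_range.mp hl
  rw [coe_tsum (summable_cross (hg l hl') N hN k (k.1 + p.1 * (M : ℤ), k.2 + p.2 * (M : ℤ)))]
  refine tsum_congr fun n => ?_
  rw [hreal l hl' (k.1 - n.1 * (N : ℤ), k.2 - n.2 * (N : ℤ)),
    hreal l hl' (k.1 + p.1 * (M : ℤ) - n.1 * (N : ℤ), k.2 + p.2 * (M : ℤ) - n.2 * (N : ℤ)),
    ← Quaternion.coe_mul]
  simp [Quaternion.re_coe]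

/-- the `n`-tsum of the `m`-sums, for a single window. -/
lemma tsum_n (M N : ℕ) (hM : 0 < M) (hN : 0 < N) (w h : ℤ × ℤ → ℍ)
    (hw2 : MemL2 w) (hw : IsRealValued w)
    (s : Finset (ℤ × ℤ)) (hs : ∀ k ∉ s, h k = 0) :
    ∑' n : ℤ × ℤ, ∑ m ∈ msq M, ‖qpair (gaborAtom M N w m n) h‖ ^ 2
      = ∑ k ∈ s, ∑ k' ∈ s, (if (M : ℤ) ∣ (k.1 - k'.1) ∧ (M : ℤ) ∣ (k.2 - k'.2)
        then (M : ℝ) ^ 2 * (∑' n : ℤ × ℤ,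
            (w (k.1 - n.1 * (N : ℤ), k.2 - n.2 * (N : ℤ))).re *
            (w (k'.1 - n.1 * (N : ℤ), k'.2 - n.2 * (N : ℤ))).re)
          * (star (h k) * h k').re else 0) := by
  classical
  have hterm : ∀ k k' : ℤ × ℤ, Summable fun n : ℤ × ℤ =>
      (if (M : ℤ) ∣ (k.1 - k'.1) ∧ (M : ℤ) ∣ (k.2 - k'.2)
        then ((M : ℝ) ^ 2 * ((w (k.1 - n.1 * (N : ℤ), k.2 - n.2 * (N : ℤ))).re *
            (w (k'.1 - n.1 * (N : ℤ), k'.2 - n.2 * (N : ℤ))).re))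
          * (star (h k) * h k').re else 0) := by
    intro k k'
    by_cases hd : (M : ℤ) ∣ (k.1 - k'.1) ∧ (M : ℤ) ∣ (k.2 - k'.2)
    · simp only [if_pos hd]
      exact (((summable_cross hw2 N hN k k').mul_left ((M : ℝ) ^ 2)).mul_right
        ((star (h k) * h k').re))
    · simp only [if_neg hd]; exact summable_zero
  calc ∑' n : ℤ × ℤ, ∑ m ∈ msq M, ‖qpair (gaborAtom M N w m n) h‖ ^ 2
      = ∑' n : ℤ × ℤ, ∑ k ∈ s, ∑ k' ∈ s,
          (if (M : ℤ) ∣ (k.1 - k'.1) ∧ (M : ℤ) ∣ (k.2 - k'.2)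
            then ((M : ℝ) ^ 2 * ((w (k.1 - n.1 * (N : ℤ), k.2 - n.2 * (N : ℤ))).re *
                (w (k'.1 - n.1 * (N : ℤ), k'.2 - n.2 * (N : ℤ))).re))
              * (star (h k) * h k').re else 0) :=
        tsum_congr fun n => msum M N hM n w h hw s hs
    _ = ∑ k ∈ s, ∑' n : ℤ × ℤ, ∑ k' ∈ s,
          (if (M : ℤ) ∣ (k.1 - k'.1) ∧ (M : ℤ) ∣ (k.2 - k'.2)
            then ((M : ℝ) ^ 2 * ((w (k.1 - n.1 * (N : ℤ), k.2 - n.2 * (N : ℤ))).re *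
                (w (k'.1 - n.1 * (N : ℤ), k'.2 - n.2 * (N : ℤ))).re))
              * (star (h k) * h k').re else 0) :=
        Summable.tsum_finsetSum fun k _ => summable_sum fun k' _ => hterm k k'
    _ = ∑ k ∈ s, ∑ k' ∈ s, ∑' n : ℤ × ℤ,
          (if (M : ℤ) ∣ (k.1 - k'.1) ∧ (M : ℤ) ∣ (k.2 - k'.2)
            then ((M : ℝ) ^ 2 * ((w (k.1 - n.1 * (N : ℤ), k.2 - n.2 * (N : ℤ))).re *
                (w (k'.1 - n.1 * (N : ℤ), k'.2 - n.2 * (N : ℤ))).re))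
              * (star (h k) * h k').re else 0) :=
        Finset.sum_congr rfl fun k _ => Summable.tsum_finsetSum fun k' _ => hterm k k'
    _ = _ := by
        refine Finset.sum_congr rfl fun k _ => Finset.sum_congr rfl fun k' _ => ?_
        by_cases hd : (M : ℤ) ∣ (k.1 - k'.1) ∧ (M : ℤ) ∣ (k.2 - k'.2)
        · simp only [if_pos hd]
          rw [tsum_mul_right, tsum_mul_left]
        · simp only [if_neg hd, tsum_zero]

lemma frame_eq (L M N : ℕ) (hM : 0 < M) (hN : 0 < N) (g : ℕ → ℤ × ℤ → ℍ)
    (hg : ∀ l < L, MemL2 (g l)) (hreal : ∀ l < L, IsRealValued (g l))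
    (h : ℤ × ℤ → ℍ) (s : Finset (ℤ × ℤ)) (hs : ∀ k ∉ s, h k = 0) :
    frameSum L M N g h = ∑ k ∈ s, ∑ k' ∈ s,
      (if (M : ℤ) ∣ (k.1 - k'.1) ∧ (M : ℤ) ∣ (k.2 - k'.2)
        then (M : ℝ) ^ 2 * W L N g k k' * (star (h k) * h k').re else 0) := by
  classical
  calc frameSum L M N g h
      = ∑ l ∈ Finset.range L, ∑ k ∈ s, ∑ k' ∈ s,
          (if (M : ℤ) ∣ (k.1 - k'.1) ∧ (M : ℤ) ∣ (k.2 - k'.2)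
            then (M : ℝ) ^ 2 * (∑' n : ℤ × ℤ,
                (g l (k.1 - n.1 * (N : ℤ), k.2 - n.2 * (N : ℤ))).re *
                (g l (k'.1 - n.1 * (N : ℤ), k'.2 - n.2 * (N : ℤ))).re)
              * (star (h k) * h k').re else 0) :=
        Finset.sum_congr rfl fun l hl => tsum_n M N hM hN (g l) h
          (hg l (Finset.mem_range.mp hl)) (hreal l (Finset.mem_range.mp hl)) s hs
    _ = ∑ k ∈ s, ∑ k' ∈ s, ∑ l ∈ Finset.range L,
          (if (M : ℤ) ∣ (k.1 - k'.1) ∧ (M : ℤ) ∣ (k.2 - k'.2)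
            then (M : ℝ) ^ 2 * (∑' n : ℤ × ℤ,
                (g l (k.1 - n.1 * (N : ℤ), k.2 - n.2 * (N : ℤ))).re *
                (g l (k'.1 - n.1 * (N : ℤ), k'.2 - n.2 * (N : ℤ))).re)
              * (star (h k) * h k').re else 0) := by
        rw [Finset.sum_comm]
        exact Finset.sum_congr rfl fun k _ => Finset.sum_comm
    _ = _ := by
        refine Finset.sum_congr rfl fun k _ => Finset.sum_congr rfl fun k' _ => ?_
        by_cases hd : (M : ℤ) ∣ (k.1 - k'.1) ∧ (M : ℤ) ∣ (k.2 - k'.2)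
        · simp only [if_pos hd, W, Finset.mul_sum, Finset.sum_mul]
        · simp only [if_neg hd, Finset.sum_const_zero]

def FF (L M N : ℕ) (g : ℕ → ℤ × ℤ → ℍ) (h : ℤ × ℤ → ℍ) (k p : ℤ × ℤ) : ℍ :=
  star (h k) * h (k.1 + p.1 * (M : ℤ), k.2 + p.2 * (M : ℤ)) * gaborG L M N g k p

def QQ (L M N : ℕ) (g : ℕ → ℤ × ℤ → ℍ) (h : ℤ × ℤ → ℍ) (s : Finset (ℤ × ℤ)) : ℍ :=
  ∑ k ∈ s, ∑ k' ∈ s, (if (M : ℤ) ∣ (k.1 - k'.1) ∧ (M : ℤ) ∣ (k.2 - k'.2)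
    then star (h k) * h k' * ((W L N g k k' : ℝ) : ℍ) else 0)

def PP (M : ℕ) (s : Finset (ℤ × ℤ)) : Finset (ℤ × ℤ) :=
  insert 0 (Finset.image
    (fun q : (ℤ × ℤ) × (ℤ × ℤ) => ((q.2.1 - q.1.1) / (M : ℤ), (q.2.2 - q.1.2) / (M : ℤ)))
    (s ×ˢ s))

lemma FF_not_mem (L M N : ℕ) (hM : 0 < M) (g : ℕ → ℤ × ℤ → ℍ) (h : ℤ × ℤ → ℍ)
    (s : Finset (ℤ × ℤ)) (hs : ∀ k ∉ s, h k = 0) (k : ℤ × ℤ) (hk : k ∈ s)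
    (p : ℤ × ℤ) (hp : p ∉ PP M s) : FF L M N g h k p = 0 := by
  have hMZ : (M : ℤ) ≠ 0 := by exact_mod_cast hM.ne'
  by_cases hz : h (k.1 + p.1 * (M : ℤ), k.2 + p.2 * (M : ℤ)) = 0
  · simp [FF, hz]
  · exfalso
    apply hp
    have hks : ((k.1 + p.1 * (M : ℤ), k.2 + p.2 * (M : ℤ)) : ℤ × ℤ) ∈ s := by
      by_contra hns; exact hz (hs _ hns)
    refine Finset.mem_insert_of_mem (Finset.mem_image.mpr
      ⟨(k, (k.1 + p.1 * (M : ℤ), k.2 + p.2 * (M : ℤ))), Finset.mem_product.mpr ⟨hk, hks⟩, ?_⟩)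
    simp only
    rw [add_sub_cancel_left, add_sub_cancel_left, Int.mul_ediv_cancel _ hMZ,
      Int.mul_ediv_cancel _ hMZ]

lemma bij_eq (L M N : ℕ) (hM : 0 < M) (hN : 0 < N) (g : ℕ → ℤ × ℤ → ℍ)
    (hg : ∀ l < L, MemL2 (g l)) (hreal : ∀ l < L, IsRealValued (g l))
    (h : ℤ × ℤ → ℍ) (s : Finset (ℤ × ℤ)) (hs : ∀ k ∉ s, h k = 0)
    (k : ℤ × ℤ) (hk : k ∈ s) :
    ∑ p ∈ PP M s, FF L M N g h k p
      = ∑ k' ∈ s, (if (M : ℤ) ∣ (k.1 - k'.1) ∧ (M : ℤ) ∣ (k.2 - k'.2)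
          then star (h k) * h k' * ((W L N g k k' : ℝ) : ℍ) else 0) := by
  classical
  have hMZ : (M : ℤ) ≠ 0 := by exact_mod_cast hM.ne'
  rw [← Finset.sum_filter (fun k' => (M : ℤ) ∣ (k.1 - k'.1) ∧ (M : ℤ) ∣ (k.2 - k'.2))
    (fun k' => star (h k) * h k' * ((W L N g k k' : ℝ) : ℍ))]
  rw [← Finset.sum_filter_of_ne
    (p := fun p : ℤ × ℤ => ((k.1 + p.1 * (M : ℤ), k.2 + p.2 * (M : ℤ)) : ℤ × ℤ) ∈ s)
    (fun p hp hne => by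
      by_contra hns
      exact hne (by simp [FF, hs _ hns]))]
  refine Finset.sum_bij'
    (i := fun p _ => ((k.1 + p.1 * (M : ℤ), k.2 + p.2 * (M : ℤ)) : ℤ × ℤ))
    (j := fun k' _ => (((k'.1 - k.1) / (M : ℤ), (k'.2 - k.2) / (M : ℤ)) : ℤ × ℤ))
    ?_ ?_ ?_ ?_ ?_
  · intro p hp
    obtain ⟨-, hps⟩ := Finset.mem_filter.mp hp
    exact Finset.mem_filter.mpr ⟨hps, ⟨-p.1, by ring⟩, ⟨-p.2, by ring⟩⟩
  · intro k' hk'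
    obtain ⟨hk's, hd1, hd2⟩ := Finset.mem_filter.mp hk'
    have e1 : k.1 + (k'.1 - k.1) / (M : ℤ) * (M : ℤ) = k'.1 := by
      rw [Int.ediv_mul_cancel (dvd_sub_comm.mp hd1)]; ring
    have e2 : k.2 + (k'.2 - k.2) / (M : ℤ) * (M : ℤ) = k'.2 := by
      rw [Int.ediv_mul_cancel (dvd_sub_comm.mp hd2)]; ring
    have hpair : ((k.1 + (k'.1 - k.1) / (M : ℤ) * (M : ℤ),
        k.2 + (k'.2 - k.2) / (M : ℤ) * (M : ℤ)) : ℤ × ℤ) = k' := Prod.ext e1 e2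
    refine Finset.mem_filter.mpr ⟨Finset.mem_insert_of_mem (Finset.mem_image.mpr
      ⟨(k, k'), Finset.mem_product.mpr ⟨hk, hk's⟩, rfl⟩), ?_⟩
    rw [hpair]; exact hk's
  · intro p hp
    refine Prod.ext ?_ ?_ <;> simp only
    · rw [add_sub_cancel_left, Int.mul_ediv_cancel _ hMZ]
    · rw [add_sub_cancel_left, Int.mul_ediv_cancel _ hMZ]
  · intro k' hk'
    obtain ⟨hk's, hd1, hd2⟩ := Finset.mem_filter.mp hk'
    refine Prod.ext ?_ ?_ <;> simp only
    · rw [Int.ediv_mul_cancel (dvd_sub_comm.mp hd1)]; ring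
    · rw [Int.ediv_mul_cancel (dvd_sub_comm.mp hd2)]; ring
  · intro p hp
    show FF L M N g h k p = _
    rw [FF, gaborG_eq L M N hN g hg hreal k p]

lemma T1_eq (L M N : ℕ) (g : ℕ → ℤ × ℤ → ℍ) (h : ℤ × ℤ → ℍ)
    (s : Finset (ℤ × ℤ)) (hs : ∀ k ∉ s, h k = 0) :
    (∑' k : ℤ × ℤ, ((‖h k‖ ^ 2 : ℝ) : ℍ) * gaborG L M N g k 0)
      = ∑ k ∈ s, FF L M N g h k 0 := by
  rw [tsum_eq_sum (s := s) (fun k hk => by simp [hs k hk])]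
  refine Finset.sum_congr rfl fun k _ => ?_
  have hst : star (h k) * h k = ((‖h k‖ ^ 2 : ℝ) : ℍ) := by
    rw [Quaternion.star_mul_self, norm_sq_eq']
  show _ = star (h k) * h (k.1 + (0 : ℤ × ℤ).1 * (M : ℤ), k.2 + (0 : ℤ × ℤ).2 * (M : ℤ)) *
    gaborG L M N g k 0
  simp only [Prod.fst_zero, Prod.snd_zero, zero_mul, add_zero]
  rw [hst]

lemma T2_eq (L M N : ℕ) (hM : 0 < M) (g : ℕ → ℤ × ℤ → ℍ) (h : ℤ × ℤ → ℍ)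
    (s : Finset (ℤ × ℤ)) (hs : ∀ k ∉ s, h k = 0) :
    (∑' k : ℤ × ℤ, ∑' p : {p : ℤ × ℤ // p ≠ 0},
        star (h k) * h (k.1 + (p : ℤ × ℤ).1 * (M : ℤ), k.2 + (p : ℤ × ℤ).2 * (M : ℤ)) *
          gaborG L M N g k (p : ℤ × ℤ))
      = ∑ k ∈ s, ∑ p ∈ (PP M s).erase 0, FF L M N g h k p := by
  classical
  have hoff : ∀ k ∉ s, (∑' p : {p : ℤ × ℤ // p ≠ 0},
      star (h k) * h (k.1 + (p : ℤ × ℤ).1 * (M : ℤ), k.2 + (p : ℤ × ℤ).2 * (M : ℤ)) *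
        gaborG L M N g k (p : ℤ × ℤ)) = 0 := by
    intro k hk
    rw [tsum_congr (fun p => by rw [hs k hk, star_zero, zero_mul, zero_mul]), tsum_zero]
  rw [tsum_eq_sum (s := s) hoff]
  refine Finset.sum_congr rfl fun k hk => ?_
  have hsub : (∑' p : {p : ℤ × ℤ // p ≠ 0},
      star (h k) * h (k.1 + (p : ℤ × ℤ).1 * (M : ℤ), k.2 + (p : ℤ × ℤ).2 * (M : ℤ)) *
        gaborG L M N g k (p : ℤ × ℤ))
      = ∑' p : ℤ × ℤ, Set.indicator {p : ℤ × ℤ | p ≠ 0} (FF L M N g h k) p :=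
    tsum_subtype {p : ℤ × ℤ | p ≠ 0} (FF L M N g h k)
  rw [hsub]
  rw [tsum_eq_sum (s := (PP M s).erase 0) (fun p hp => ?_)]
  · refine Finset.sum_congr rfl fun p hp => ?_
    exact Set.indicator_of_mem (show p ∈ {q : ℤ × ℤ | q ≠ 0} from (Finset.mem_erase.mp hp).1) _
  · by_cases hp0 : p = 0
    · subst hp0
      exact Set.indicator_of_notMem (show (0 : ℤ × ℤ) ∉ {q : ℤ × ℤ | q ≠ 0} by simp) _
    · rw [Set.indicator_of_mem (show p ∈ {q : ℤ × ℤ | q ≠ 0} from hp0)]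
      exact FF_not_mem L M N hM g h s hs k hk p
        (fun hPP => hp (Finset.mem_erase.mpr ⟨hp0, hPP⟩))

lemma QQ_re (L M N : ℕ) (hM : 0 < M) (hN : 0 < N) (g : ℕ → ℤ × ℤ → ℍ)
    (hg : ∀ l < L, MemL2 (g l)) (hreal : ∀ l < L, IsRealValued (g l))
    (h : ℤ × ℤ → ℍ) (s : Finset (ℤ × ℤ)) (hs : ∀ k ∉ s, h k = 0) :
    frameSum L M N g h = (M : ℝ) ^ 2 * (QQ L M N g h s).re := by
  classical
  have hre : (QQ L M N g h s).re = ∑ k ∈ s, ∑ k' ∈ s,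
      (if (M : ℤ) ∣ (k.1 - k'.1) ∧ (M : ℤ) ∣ (k.2 - k'.2)
        then W L N g k k' * (star (h k) * h k').re else 0) := by
    show reHom (QQ L M N g h s) = _
    rw [QQ, map_sum]
    refine Finset.sum_congr rfl fun k _ => ?_
    rw [map_sum]
    refine Finset.sum_congr rfl fun k' _ => ?_
    rw [apply_ite reHom, map_zero]
    congr 1
    show (star (h k) * h k' * ((W L N g k k' : ℝ) : ℍ)).re = _
    rw [Quaternion.mul_coe_eq_smul, Quaternion.re_smul, smul_eq_mul]
  rw [frame_eq L M N hM hN g hg hreal h s hs, hre, Finset.mul_sum]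
  refine Finset.sum_congr rfl fun k _ => ?_
  rw [Finset.mul_sum]
  refine Finset.sum_congr rfl fun k' _ => ?_
  by_cases hd : (M : ℤ) ∣ (k.1 - k'.1) ∧ (M : ℤ) ∣ (k.2 - k'.2)
  · rw [if_pos hd, if_pos hd, mul_assoc]
  · rw [if_neg hd, if_neg hd, mul_zero]

lemma QQ_real (L M N : ℕ) (g : ℕ → ℤ × ℤ → ℍ) (h : ℤ × ℤ → ℍ) (s : Finset (ℤ × ℤ)) :
    QQ L M N g h s = (((QQ L M N g h s).re : ℝ) : ℍ) := by
  classical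
  refine quat_real_of_star_eq ?_
  have hterm : ∀ (u v : ℍ) (r : ℝ), star (star u * v * ((r : ℝ) : ℍ)) = star v * u * ((r : ℝ) : ℍ) := by
    intro u v r
    rw [star_mul, star_mul, star_star, Quaternion.star_coe, Quaternion.coe_commutes, mul_assoc]
  calc star (QQ L M N g h s)
      = ∑ k ∈ s, ∑ k' ∈ s, (if (M : ℤ) ∣ (k.1 - k'.1) ∧ (M : ℤ) ∣ (k.2 - k'.2)
          then star (h k') * h k * ((W L N g k k' : ℝ) : ℍ) else 0) := by
        rw [QQ, star_sum]
        refine Finset.sum_congr rfl fun k _ => ?_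
        rw [star_sum]
        refine Finset.sum_congr rfl fun k' _ => ?_
        rw [apply_ite (star : ℍ → ℍ), star_zero, hterm]
    _ = ∑ k' ∈ s, ∑ k ∈ s, (if (M : ℤ) ∣ (k.1 - k'.1) ∧ (M : ℤ) ∣ (k.2 - k'.2)
          then star (h k') * h k * ((W L N g k k' : ℝ) : ℍ) else 0) := Finset.sum_comm
    _ = QQ L M N g h s := by
        rw [QQ]
        refine Finset.sum_congr rfl fun x _ => Finset.sum_congr rfl fun y _ => ?_
        rw [W_symm L N g y x]
        exact if_congr (and_congr dvd_sub_comm dvd_sub_comm) rfl rfl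

end aux

/-- decomposition of the frame sum as `F₁(h) + F₂(h)` for real-valued
windows and finitely supported `h`. -/
theorem stmt_3 (L M N : ℕ) (hL : 0 < L) (hM : 0 < M) (hN : 0 < N)
    (g : ℕ → ℤ × ℤ → ℍ) (hg : ∀ l < L, MemL2 (g l))
    (hreal : ∀ l < L, IsRealValued (g l))
    (h : ℤ × ℤ → ℍ) (hsupp : (Function.support h).Finite) :
    ((frameSum L M N g h : ℝ) : ℍ) =
      (M : ℍ) ^ 2 * ∑' k : ℤ × ℤ, ((‖h k‖ ^ 2 : ℝ) : ℍ) * gaborG L M N g k 0 +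
      (M : ℍ) ^ 2 * ∑' k : ℤ × ℤ, ∑' p : {p : ℤ × ℤ // p ≠ 0},
        star (h k) * h (k.1 + (p : ℤ × ℤ).1 * (M : ℤ), k.2 + (p : ℤ × ℤ).2 * (M : ℤ)) *
          gaborG L M N g k (p : ℤ × ℤ) := by
  classical
  set s : Finset (ℤ × ℤ) := hsupp.toFinset with hsdef
  have hs : ∀ k ∉ s, h k = 0 := by
    intro k hk
    by_contra hne
    exact hk (hsupp.mem_toFinset.mpr hne)
  have hcomb : (∑' k : ℤ × ℤ, ((‖h k‖ ^ 2 : ℝ) : ℍ) * gaborG L M N g k 0) +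
      (∑' k : ℤ × ℤ, ∑' p : {p : ℤ × ℤ // p ≠ 0},
        star (h k) * h (k.1 + (p : ℤ × ℤ).1 * (M : ℤ), k.2 + (p : ℤ × ℤ).2 * (M : ℤ)) *
          gaborG L M N g k (p : ℤ × ℤ)) = QQ L M N g h s := by
    rw [T1_eq L M N g h s hs, T2_eq L M N hM g h s hs, ← Finset.sum_add_distrib]
    rw [QQ]
    refine Finset.sum_congr rfl fun k hk => ?_
    rw [Finset.add_sum_erase (PP M s) (FF L M N g h k)
      (Finset.mem_insert_self 0 _)]
    exact bij_eq L M N hM hN g hg hreal h s hs k hk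
  calc ((frameSum L M N g h : ℝ) : ℍ)
      = (((M : ℝ) ^ 2 * (QQ L M N g h s).re : ℝ) : ℍ) := by
        rw [QQ_re L M N hM hN g hg hreal h s hs]
    _ = (((M : ℝ) ^ 2 : ℝ) : ℍ) * (((QQ L M N g h s).re : ℝ) : ℍ) := by
        rw [Quaternion.coe_mul]
    _ = (M : ℍ) ^ 2 * QQ L M N g h s := by
        rw [← QQ_real]
        norm_cast
    _ = _ := by
        rw [← hcomb, mul_add]
end
end
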